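/- Let M be a commutative monoid, h : {0,1}^n → M, and α ∈ {0,1}^n with |1−α| even, where 1 = (1,…,1). Then Σ over even θ ≤ α of h(1−α+θ), plus Σ over odd β ≤ 1−α of (Σ over even θ ≤ α+β of h(θ)), equals Σ over even β ≤ 1−α of (Σ over even θ ≤ α+β of h(θ)). -/

import Mathlib

open Finset

-- core parity count
lemma parity_half {n : ℕ} (C : Finset (Fin n)) (hC : C ≠ ∅) :
    (C.powerset.filter (fun T => Even T.card)).card
    = (C.powerset.filter (fun T => Odd T.card)).card := by
  have h0 : ∑ t ∈ C.powerset, (-1:ℤ)^t.card = 0 := by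
    rw [Finset.sum_powerset_neg_one_pow_card, if_neg hC]
  rw [← Finset.sum_filter_add_sum_filter_not C.powerset (fun T => Even T.card)] at h0
  have h1 : ∑ t ∈ C.powerset.filter (fun T => Even T.card), (-1:ℤ)^t.card
      = (C.powerset.filter (fun T => Even T.card)).card := by
    rw [Finset.sum_congr rfl (fun t ht => ?_), Finset.sum_const, nsmul_eq_mul, mul_one]
    exact Even.neg_one_pow (Finset.mem_filter.mp ht).2
  have h2 : ∑ t ∈ C.powerset.filter (fun T => ¬ Even T.card), (-1:ℤ)^t.card
      = -((C.powerset.filter (fun T => ¬ Even T.card)).card) := by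
    rw [Finset.sum_congr rfl (fun t ht => ?_), Finset.sum_const, nsmul_eq_mul, mul_neg_one]
    exact Odd.neg_one_pow (Nat.not_even_iff_odd.mp (Finset.mem_filter.mp ht).2)
  rw [h1, h2] at h0
  have : ((C.powerset.filter (fun T => Even T.card)).card : ℤ)
      = (C.powerset.filter (fun T => ¬ Even T.card)).card := by linarith
  have h3 := Nat.cast_injective (R := ℤ) this
  rw [h3]
  congr 1
  exact Finset.filter_congr (fun x _ => by simp [Nat.not_even_iff_odd])

-- reindexing counts by β ↦ β \ A
lemma cnt_reindex {n : ℕ} (D A : Finset (Fin n)) (hAD : A ⊆ D) (p : ℕ → Prop)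
    [DecidablePred p] :
    ((Finset.univ : Finset (Finset (Fin n))).filter
        (fun β => β ⊆ D ∧ p β.card ∧ A ⊆ β)).card
    = ((D \ A).powerset.filter (fun T => p (A.card + T.card))).card := by
  apply Finset.card_nbij' (fun β => β \ A) (fun T => A ∪ T)
  · intro β hβ
    simp only [Finset.mem_coe, Finset.mem_filter, Finset.mem_univ, true_and] at hβ
    obtain ⟨hβD, hp, hAβ⟩ := hβ
    simp only [Finset.mem_coe, Finset.mem_filter, Finset.mem_powerset]
    refine ⟨Finset.sdiff_subset_sdiff hβD (le_refl A), ?_⟩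
    have hd : Disjoint A (β \ A) := Finset.disjoint_sdiff
    have : A ∪ (β \ A) = β := Finset.union_sdiff_of_subset hAβ
    have hc : A.card + (β \ A).card = β.card := by
      rw [← Finset.card_union_of_disjoint hd, this]
    rwa [hc]
  · intro T hT
    simp only [Finset.mem_coe, Finset.mem_filter, Finset.mem_powerset] at hT
    obtain ⟨hTC, hp⟩ := hT
    have hd : Disjoint A T := (Finset.disjoint_sdiff.mono_right hTC).symm.symm
    have hd2 : Disjoint A T := Finset.disjoint_of_subset_right hTC Finset.disjoint_sdiff
    simp only [Finset.mem_coe, Finset.mem_filter, Finset.mem_univ, true_and]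
    refine ⟨Finset.union_subset hAD (hTC.trans (Finset.sdiff_subset)), ?_, Finset.subset_union_left⟩
    rwa [Finset.card_union_of_disjoint hd2]
  · intro β hβ
    simp only [Finset.mem_coe, Finset.mem_filter, Finset.mem_univ, true_and] at hβ
    exact Finset.union_sdiff_of_subset hβ.2.2
  · intro T hT
    simp only [Finset.mem_coe, Finset.mem_filter, Finset.mem_powerset] at hT
    have hd2 : Disjoint A T := Finset.disjoint_of_subset_right hT.1 Finset.disjoint_sdiff
    exact Finset.union_sdiff_cancel_left hd2

lemma cnt {n : ℕ} (D A : Finset (Fin n)) (hAD : A ⊆ D) (hD : Even D.card) :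
    ((Finset.univ : Finset (Finset (Fin n))).filter
        (fun β => β ⊆ D ∧ Even β.card ∧ A ⊆ β)).card
    = ((Finset.univ : Finset (Finset (Fin n))).filter
        (fun β => β ⊆ D ∧ Odd β.card ∧ A ⊆ β)).card
      + (if D ⊆ A then 1 else 0) := by
  rw [cnt_reindex D A hAD, cnt_reindex D A hAD]
  by_cases hC : D \ A = ∅
  · have hDA : D ⊆ A := by
      intro x hx
      by_contra hxA
      exact (Finset.eq_empty_iff_forall_notMem.mp hC x) (Finset.mem_sdiff.mpr ⟨hx, hxA⟩)
    have hAeq : A = D := Finset.Subset.antisymm hAD hDA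
    rw [if_pos hDA, hC]
    subst hAeq
    simp [Finset.powerset_empty, Finset.filter_singleton, hD, Nat.not_odd_iff_even.mpr hD]
  · have hDA : ¬ D ⊆ A := by
      intro hsub
      exact hC (Finset.sdiff_eq_empty_iff_subset.mpr hsub)
    rw [if_neg hDA, add_zero]
    rcases Nat.even_or_odd A.card with hA | hA
    · rw [Finset.filter_congr (fun T _ => by simp [Nat.even_add, hA] : ∀ T ∈ (D\A).powerset, Even (A.card + T.card) ↔ Even T.card),
        Finset.filter_congr (fun T _ => by simp [Nat.odd_add', hA, Nat.not_even_iff_odd, Nat.not_odd_iff_even] : ∀ T ∈ (D\A).powerset, Odd (A.card + T.card) ↔ Odd T.card)]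
      exact parity_half _ hC
    · rw [Finset.filter_congr (fun T _ => by rw [Nat.even_iff, Nat.odd_iff, Nat.add_mod, Nat.odd_iff.mp hA]; omega : ∀ T ∈ (D\A).powerset, Even (A.card + T.card) ↔ Odd T.card),
        Finset.filter_congr (fun T _ => by rw [Nat.odd_iff, Nat.even_iff, Nat.add_mod, Nat.odd_iff.mp hA]; omega : ∀ T ∈ (D\A).powerset, Odd (A.card + T.card) ↔ Even T.card)]
      exact (parity_half _ hC).symm

lemma dbl {M : Type*} [AddCommMonoid M] {n : ℕ}
    (Q : Finset (Fin n) → Prop) (P : Finset (Fin n) → Finset (Fin n) → Prop)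
    [DecidablePred Q] [∀ β, DecidablePred (P β)] (h : Finset (Fin n) → M) :
    ∑ β ∈ Finset.univ.filter Q, ∑ θ ∈ Finset.univ.filter (P β), h θ
    = ∑ θ ∈ (Finset.univ : Finset (Finset (Fin n))),
        (Finset.univ.filter (fun β => Q β ∧ P β θ)).card • h θ := by
  calc ∑ β ∈ Finset.univ.filter Q, ∑ θ ∈ Finset.univ.filter (P β), h θ
      = ∑ β ∈ Finset.univ.filter Q, ∑ θ ∈ Finset.univ, if P β θ then h θ else 0 :=
        Finset.sum_congr rfl fun β _ => Finset.sum_filter _ _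
    _ = ∑ θ ∈ Finset.univ, ∑ β ∈ Finset.univ.filter Q, if P β θ then h θ else 0 :=
        Finset.sum_comm
    _ = ∑ θ ∈ (Finset.univ : Finset (Finset (Fin n))),
          (Finset.univ.filter (fun β => Q β ∧ P β θ)).card • h θ := by
        refine Finset.sum_congr rfl fun θ _ => ?_
        rw [← Finset.sum_filter, Finset.sum_const, Finset.filter_filter]

lemma subset_union_iff {n : ℕ} (α S β : Finset (Fin n)) (hβ : β ⊆ αᶜ) :
    S ⊆ α ∪ β ↔ S ∩ αᶜ ⊆ β := by
  constructor
  · intro hS x hx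
    rw [Finset.mem_inter] at hx
    rcases Finset.mem_union.mp (hS hx.1) with h1 | h1
    · exact absurd h1 (Finset.mem_compl.mp hx.2)
    · exact h1
  · intro hS x hx
    by_cases hxα : x ∈ α
    · exact Finset.mem_union_left _ hxα
    · exact Finset.mem_union_right _ (hS (Finset.mem_inter.mpr ⟨hx, Finset.mem_compl.mpr hxα⟩))

theorem stmt_12 {M : Type*} [AddCommMonoid M] (n : ℕ)
    (h : Finset (Fin n) → M) (α : Finset (Fin n)) (hα : Even αᶜ.card) :
    (∑ θ ∈ (Finset.univ : Finset (Finset (Fin n))).filter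
        (fun θ => θ ⊆ α ∧ Even θ.card), h (αᶜ ∪ θ)) +
    (∑ β ∈ (Finset.univ : Finset (Finset (Fin n))).filter
        (fun β => β ⊆ αᶜ ∧ Odd β.card),
      ∑ θ ∈ (Finset.univ : Finset (Finset (Fin n))).filter
        (fun θ => θ ⊆ α ∪ β ∧ Even θ.card), h θ) =
    (∑ β ∈ (Finset.univ : Finset (Finset (Fin n))).filter
        (fun β => β ⊆ αᶜ ∧ Even β.card),
      ∑ θ ∈ (Finset.univ : Finset (Finset (Fin n))).filter
        (fun θ => θ ⊆ α ∪ β ∧ Even θ.card), h θ) := by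
  classical
  -- Step 1: reindex the first sum
  have step1 : (∑ θ ∈ (Finset.univ : Finset (Finset (Fin n))).filter
        (fun θ => θ ⊆ α ∧ Even θ.card), h (αᶜ ∪ θ))
      = ∑ S ∈ (Finset.univ : Finset (Finset (Fin n))),
          (if αᶜ ⊆ S ∧ Even S.card then 1 else 0) • h S := by
    have e1 : (∑ θ ∈ (Finset.univ : Finset (Finset (Fin n))).filter
        (fun θ => θ ⊆ α ∧ Even θ.card), h (αᶜ ∪ θ))
        = ∑ S ∈ (Finset.univ : Finset (Finset (Fin n))).filter
            (fun S => αᶜ ⊆ S ∧ Even S.card), h S := by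
      apply Finset.sum_nbij' (fun θ => αᶜ ∪ θ) (fun S => S ∩ α)
      · intro θ hθ
        simp only [Finset.mem_filter, Finset.mem_univ, true_and] at *
        obtain ⟨hθα, hev⟩ := hθ
        refine ⟨Finset.subset_union_left, ?_⟩
        have hd : Disjoint αᶜ θ :=
          Finset.disjoint_of_subset_right hθα (disjoint_compl_left)
        rw [Finset.card_union_of_disjoint hd]
        exact hα.add hev
      · intro S hS
        simp only [Finset.mem_filter, Finset.mem_univ, true_and] at *
        obtain ⟨hcs, hev⟩ := hS
        refine ⟨Finset.inter_subset_right, ?_⟩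
        have hdec : αᶜ ∪ (S ∩ α) = S := by
          ext x
          simp only [Finset.mem_union, Finset.mem_inter, Finset.mem_compl]
          constructor
          · rintro (hx | hx)
            · exact hcs (Finset.mem_compl.mpr hx)
            · exact hx.1
          · intro hx
            by_cases hxα : x ∈ α
            · exact Or.inr ⟨hx, hxα⟩
            · exact Or.inl hxα
        have hd : Disjoint αᶜ (S ∩ α) :=
          Finset.disjoint_of_subset_right Finset.inter_subset_right
            (disjoint_compl_left)
        have : αᶜ.card + (S ∩ α).card = S.card := by
          rw [← Finset.card_union_of_disjoint hd, hdec]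
        rcases hα with ⟨k, hk⟩
        rcases hev with ⟨m, hm⟩
        exact ⟨m - k, by omega⟩
      · intro θ hθ
        simp only [Finset.mem_filter, Finset.mem_univ, true_and] at hθ
        ext x
        simp only [Finset.mem_inter, Finset.mem_union, Finset.mem_compl]
        constructor
        · rintro ⟨hx | hx, hxα⟩
          · exact absurd hxα hx
          · exact hx
        · intro hx
          exact ⟨Or.inr hx, hθ.1 hx⟩
      · intro S hS
        simp only [Finset.mem_filter, Finset.mem_univ, true_and] at hS
        ext x
        simp only [Finset.mem_union, Finset.mem_inter, Finset.mem_compl]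
        constructor
        · rintro (hx | hx)
          · exact hS.1 (Finset.mem_compl.mpr hx)
          · exact hx.1
        · intro hx
          by_cases hxα : x ∈ α
          · exact Or.inr ⟨hx, hxα⟩
          · exact Or.inl hxα
      · intro θ _; rfl
    rw [e1, Finset.sum_filter]
    refine Finset.sum_congr rfl fun S _ => ?_
    by_cases hc : αᶜ ⊆ S ∧ Even S.card
    · rw [if_pos hc, if_pos hc, one_smul]
    · rw [if_neg hc, if_neg hc, zero_smul]
  rw [step1, dbl, dbl, ← Finset.sum_add_distrib]
  refine Finset.sum_congr rfl fun S _ => ?_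
  rw [← add_nsmul]
  congr 1
  by_cases hev : Even S.card
  · have key := cnt αᶜ (S ∩ αᶜ) Finset.inter_subset_right hα
    have hoc : (Finset.univ.filter
          (fun β => (β ⊆ αᶜ ∧ Odd β.card) ∧ S ⊆ α ∪ β ∧ Even S.card)).card
        = (Finset.univ.filter
          (fun β : Finset (Fin n) => β ⊆ αᶜ ∧ Odd β.card ∧ S ∩ αᶜ ⊆ β)).card := by
      congr 1
      refine Finset.filter_congr fun β _ => ?_
      constructor
      · rintro ⟨⟨h1, h2⟩, h3, _⟩
        exact ⟨h1, h2, (subset_union_iff α S β h1).mp h3⟩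
      · rintro ⟨h1, h2, h3⟩
        exact ⟨⟨h1, h2⟩, (subset_union_iff α S β h1).mpr h3, hev⟩
    have hec : (Finset.univ.filter
          (fun β => (β ⊆ αᶜ ∧ Even β.card) ∧ S ⊆ α ∪ β ∧ Even S.card)).card
        = (Finset.univ.filter
          (fun β : Finset (Fin n) => β ⊆ αᶜ ∧ Even β.card ∧ S ∩ αᶜ ⊆ β)).card := by
      congr 1
      refine Finset.filter_congr fun β _ => ?_
      constructor
      · rintro ⟨⟨h1, h2⟩, h3, _⟩
        exact ⟨h1, h2, (subset_union_iff α S β h1).mp h3⟩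
      · rintro ⟨h1, h2, h3⟩
        exact ⟨⟨h1, h2⟩, (subset_union_iff α S β h1).mpr h3, hev⟩
    have hind : (if αᶜ ⊆ S ∧ Even S.card then 1 else 0)
        = (if αᶜ ⊆ S ∩ αᶜ then 1 else 0) := by
      have : (αᶜ ⊆ S ∩ αᶜ) ↔ (αᶜ ⊆ S ∧ Even S.card) := by
        rw [Finset.subset_inter_iff]
        exact ⟨fun ⟨h1, _⟩ => ⟨h1, hev⟩, fun ⟨h1, _⟩ => ⟨h1, Finset.Subset.refl _⟩⟩
      simp [this]
    rw [hoc, hec, hind, key, add_comm]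
  · rw [if_neg (fun hc => hev hc.2)]
    have e0 : ∀ p : ℕ → Prop, ∀ _ : DecidablePred p, (Finset.univ.filter
          (fun β => (β ⊆ αᶜ ∧ p β.card) ∧ S ⊆ α ∪ β ∧ Even S.card)).card = 0 := by
      intro p _
      rw [Finset.card_eq_zero, Finset.filter_eq_empty_iff]
      rintro β _ ⟨_, _, h2⟩
      exact hev h2
    rw [e0 Odd _, e0 Even _, zero_add]
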